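/- In ℂ^d with d ≥ 1, let e₀ be the first standard basis vector and let u := (1/√d)·Σ_{j=0}^{d−1} e_j be the uniform superposition (a vector from a basis mutually unbiased with the standard basis). Then Φ(|e₀⟩⟨e₀|, |u⟩⟨u|) = 4(d−1)/d². -/

import Mathlib

open Matrix ComplexOrder

/-- The incompatibility measure Φ(ρ,σ) := 2‖[ρ,σ]‖²_HS = 2·Tr([ρ,σ]†[ρ,σ]). -/
noncomputable def Phi {n : ℕ} (ρ σ : Matrix (Fin n) (Fin n) ℂ) : ℝ :=
  2 * (((ρ * σ - σ * ρ)ᴴ * (ρ * σ - σ * ρ)).trace).re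

/-- The rank-one projection |ψ⟩⟨ψ| associated to a (unit) vector ψ. -/
def pureState {n : ℕ} (ψ : Fin n → ℂ) : Matrix (Fin n) (Fin n) ℂ :=
  vecMulVec ψ (star ψ)

theorem phi_mub_states (d : ℕ) (hd : 1 ≤ d)
    (e₀ u : Fin d → ℂ)
    (he₀ : e₀ = fun j : Fin d => if (j : ℕ) = 0 then (1 : ℂ) else 0)
    (hu : u = fun _ => (1 / Real.sqrt d : ℂ)) :
    Phi (pureState e₀) (pureState u) = 4 * ((d : ℝ) - 1) / (d : ℝ) ^ 2 := by
  subst he₀ hu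
  have hd0 : (0:ℝ) ≤ d := Nat.cast_nonneg d
  have hdpos : (0:ℝ) < d := by exact_mod_cast hd
  have hdC : (d:ℂ) ≠ 0 := by exact_mod_cast hdpos.ne'
  set z : Fin d := ⟨0, hd⟩ with hzdef
  set a : Fin d → ℂ := fun i => if i = z then 1 else 0 with hadef
  have hz : ∀ j : Fin d, ((j:ℕ) = 0) ↔ j = z := fun j => by
    simp [Fin.ext_iff, hzdef]
  have hcc : ((Real.sqrt d : ℝ) : ℂ) * ((Real.sqrt d : ℝ) : ℂ) = (d:ℂ) := by
    rw [← Complex.ofReal_mul, Real.mul_self_sqrt hd0]; norm_cast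
  have hC : pureState (fun j : Fin d => if (j:ℕ) = 0 then (1:ℂ) else 0) *
      pureState (fun _ => (1/Real.sqrt d : ℂ)) -
      pureState (fun _ => (1/Real.sqrt d : ℂ)) *
      pureState (fun j : Fin d => if (j:ℕ) = 0 then (1:ℂ) else 0) =
      Matrix.of (fun i k => (a i - a k) / d) := by
    ext i k
    simp only [pureState, vecMulVec, Matrix.sub_apply, Matrix.mul_apply, Matrix.of_apply,
      Pi.star_apply, Complex.star_def, apply_ite (starRingEnd ℂ), _root_.map_one, _root_.map_zero, map_div₀,
      Complex.conj_ofReal, hz, hadef]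
    simp only [ite_mul, mul_ite, one_mul, zero_mul, mul_zero, mul_one,
      Finset.sum_ite_eq', Finset.mem_univ, if_true]
    by_cases hi : i = z <;> by_cases hk : k = z <;>
      simp [hi, hk] <;> field_simp <;> rw [sq, hcc]
  unfold Phi
  rw [hC]
  have htr : (((Matrix.of (fun i k => (a i - a k) / (d:ℂ)))ᴴ *
      (Matrix.of (fun i k => (a i - a k) / (d:ℂ)))).trace) =
      ∑ i : Fin d, ∑ j : Fin d, ((a j - a i)/d) * ((a j - a i)/d) := by
    simp only [Matrix.trace, Matrix.diag, Matrix.mul_apply, Matrix.conjTranspose_apply,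
      Matrix.of_apply]
    refine Finset.sum_congr rfl fun i _ => Finset.sum_congr rfl fun j _ => ?_
    congr 1
    have : ∀ x : Fin d, (starRingEnd ℂ) (a x) = a x := fun x => by
      by_cases h : x = z <;> simp [hadef, h]
    simp [map_div₀, map_sub, this]
  rw [htr]
  have haa : ∀ x : Fin d, a x * a x = a x := fun x => by
    by_cases h : x = z <;> simp [hadef, h]
  have hs1 : ∑ j : Fin d, a j = 1 := by
    simp [hadef, Finset.sum_ite_eq']
  have hsum : ∑ i : Fin d, ∑ j : Fin d, ((a j - a i)/(d:ℂ)) * ((a j - a i)/d) =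
      (2 * d - 2) / d ^ 2 := by
    have step : ∀ i j : Fin d, ((a j - a i)/(d:ℂ)) * ((a j - a i)/d) =
        (a j * a j + a i * a i - 2 * (a i * a j)) / d ^ 2 := by
      intro i j; field_simp; ring
    calc ∑ i : Fin d, ∑ j : Fin d, ((a j - a i)/(d:ℂ)) * ((a j - a i)/d)
        = ∑ i : Fin d, ∑ j : Fin d, (a j * a j + a i * a i - 2 * (a i * a j)) / d ^ 2 := by
          exact Finset.sum_congr rfl fun i _ => Finset.sum_congr rfl fun j _ => step i j
      _ = ∑ i : Fin d, ((∑ j : Fin d, a j * a j) + d * (a i * a i)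
            - 2 * (a i * ∑ j : Fin d, a j)) / d ^ 2 := by
          refine Finset.sum_congr rfl fun i _ => ?_
          rw [← Finset.sum_div]
          congr 1
          rw [Finset.sum_sub_distrib, Finset.sum_add_distrib, Finset.sum_const,
            Finset.card_univ, Fintype.card_fin, nsmul_eq_mul, ← Finset.mul_sum,
            ← Finset.mul_sum]
      _ = (2 * d - 2) / d ^ 2 := by
          simp only [haa, hs1, mul_one]
          rw [← Finset.sum_div, Finset.sum_sub_distrib, Finset.sum_add_distrib,
            Finset.sum_const, Finset.card_univ, Fintype.card_fin, nsmul_eq_mul,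
            ← Finset.mul_sum, ← Finset.mul_sum, hs1]
          ring_nf
  rw [hsum]
  have : ((2 * (d:ℂ) - 2) / (d:ℂ) ^ 2) = (((2 * d - 2) / (d:ℝ) ^ 2 : ℝ) : ℂ) := by
    push_cast; ring
  rw [this, Complex.ofReal_re]
  field_simp
  ring
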